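/- For every zigzag path b of length n there exists a unique continuous nondecreasing function θ : [0,1] → ℝ with θ(0) = π and cos(θ(t)) = 2·b(t) − 1 for all t ∈ [0,1]; moreover this θ satisfies θ(1) = (n+1)·π. (This is the unique lifting of the controlled path b along the projection p : c₂𝕊¹ → c𝕀∼, p(x,y) = (x+1)/2, used in the proof of Theorem 1.7.) -/

import Mathlib

open Set

def IsZigzag (b : ℝ → ℝ) (n : ℕ) : Prop :=
  ContinuousOn b (Icc 0 1) ∧ (∀ t ∈ Icc (0:ℝ) 1, b t ∈ Icc (0:ℝ) 1) ∧
  ((n = 0 ∧ ∀ t ∈ Icc (0:ℝ) 1, b t = 0) ∨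
   (1 ≤ n ∧ ∃ t : ℕ → ℝ, t 0 = 0 ∧ t n = 1 ∧
     (∀ i < n, t i < t (i + 1)) ∧
     (∀ i ≤ n, b (t i) = if Odd i then 1 else 0) ∧
     (∀ i, 1 ≤ i → i ≤ n →
       if Odd i then MonotoneOn b (Icc (t (i - 1)) (t i))
       else AntitoneOn b (Icc (t (i - 1)) (t i)))))


private lemma cos_add_nat_pi (m : ℕ) (x : ℝ) :
    Real.cos (x + m * Real.pi) = (-1) ^ m * Real.cos x := by
  induction m with
  | zero => simp
  | succ k ih =>
      have h : x + ((k : ℝ) + 1) * Real.pi = (x + k * Real.pi) + Real.pi := by ring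
      push_cast
      rw [h, Real.cos_add_pi, ih, pow_succ]
      ring

private lemma cos_nat_pi (m : ℕ) : Real.cos (m * Real.pi) = (-1) ^ m := by
  simpa using cos_add_nat_pi m 0

private lemma arccos_antitone : Antitone Real.arccos := fun x y h => by
  simp only [Real.arccos]
  exact sub_le_sub_left (Real.monotone_arcsin h) _

private lemma monoGlue {f : ℝ → ℝ} {a b c : ℝ}
    (h1 : MonotoneOn f (Icc a b)) (h2 : MonotoneOn f (Icc b c)) :
    MonotoneOn f (Icc a c) := by
  intro x hx y hy hxy
  rcases le_total x b with hxb | hbx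
  · rcases le_total y b with hyb | hby
    · exact h1 ⟨hx.1, hxb⟩ ⟨hy.1, hyb⟩ hxy
    · exact le_trans (h1 ⟨hx.1, hxb⟩ ⟨hx.1.trans hxb, le_refl b⟩ hxb)
        (h2 ⟨le_refl b, hby.trans hy.2⟩ ⟨hby, hy.2⟩ hby)
  · exact h2 ⟨hbx, hx.2⟩ ⟨hbx.trans hxy, hy.2⟩ hxy

private lemma contGlue {f : ℝ → ℝ} {a b c : ℝ} (hab : a ≤ b) (hbc : b ≤ c)
    (h1 : ContinuousOn f (Icc a b)) (h2 : ContinuousOn f (Icc b c)) :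
    ContinuousOn f (Icc a c) := by
  rw [← Icc_union_Icc_eq_Icc hab hbc]
  intro x hx
  have H1 : ContinuousWithinAt f (Icc a b) x := by
    by_cases h : x ∈ Icc a b
    · exact h1 x h
    · exact continuousWithinAt_of_notMem_closure (by rwa [isClosed_Icc.closure_eq])
  have H2 : ContinuousWithinAt f (Icc b c) x := by
    by_cases h : x ∈ Icc b c
    · exact h2 x h
    · exact continuousWithinAt_of_notMem_closure (by rwa [isClosed_Icc.closure_eq])
  exact H1.union H2

private noncomputable def clampI (s : ℝ) : (Icc (0:ℝ) 1) :=
  ⟨min (max s 0) 1, ⟨le_min (le_max_right s 0) zero_le_one, min_le_right _ _⟩⟩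

private lemma clampI_continuous : Continuous clampI :=
  Continuous.subtype_mk ((continuous_id.max continuous_const).min continuous_const) _

private lemma clampI_monotone : Monotone clampI := fun x y h =>
  Subtype.mk_le_mk.mpr (min_le_min (max_le_max h le_rfl) le_rfl)

private lemma clampI_eq {s : ℝ} (hs : s ∈ Icc (0:ℝ) 1) : clampI s = ⟨s, hs⟩ :=
  Subtype.ext (by simp [clampI, max_eq_left hs.1, min_eq_left hs.2])

private lemma t_mono (t : ℕ → ℝ) (n : ℕ) (hlt : ∀ i < n, t i < t (i+1)) :
    ∀ j ≤ n, ∀ i ≤ j, t i ≤ t j := by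
  intro j
  induction j with
  | zero => intro _ i hi; interval_cases i; exact le_rfl
  | succ k ih =>
      intro hk i hi
      rcases Nat.eq_or_lt_of_le hi with h | h
      · rw [h]
      · exact (ih (by omega) i (by omega)).trans (hlt k (by omega)).le

private noncomputable def Ff (b : ℝ → ℝ) (i : ℕ) (s : ℝ) : ℝ :=
  ((i:ℝ)+1) * Real.pi + Real.arccos ((-1)^(i+1) * (2 * b s - 1))
section core
open Real

variable {b : ℝ → ℝ} {n : ℕ} {t : ℕ → ℝ}
variable (hr : ∀ s ∈ Icc (0:ℝ) 1, b s ∈ Icc (0:ℝ) 1)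
variable (hn : 1 ≤ n) (ht0 : t 0 = 0) (htn : t n = 1)
variable (hlt : ∀ i < n, t i < t (i+1))
variable (hv : ∀ i ≤ n, b (t i) = if Odd i then 1 else 0)
variable (hm : ∀ i, 1 ≤ i → i ≤ n →
    if Odd i then MonotoneOn b (Icc (t (i-1)) (t i))
    else AntitoneOn b (Icc (t (i-1)) (t i)))

include ht0 htn hlt in
private lemma t_range : ∀ i ≤ n, t i ∈ Icc (0:ℝ) 1 := fun i hi =>
  ⟨ht0 ▸ t_mono t n hlt i hi 0 (Nat.zero_le _), htn ▸ t_mono t n hlt n le_rfl i hi⟩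

include hv in
private lemma b_t_val : ∀ i ≤ n, 2 * b (t i) - 1 = (-1:ℝ)^(i+1) := by
  intro i hi
  rw [hv i hi]
  rcases Nat.even_or_odd i with he | ho
  · rw [if_neg (by simpa using he), pow_succ, he.neg_one_pow]; norm_num
  · rw [if_pos ho, pow_succ, ho.neg_one_pow]; norm_num

private lemma neg_one_pow_sq (k : ℕ) : ((-1:ℝ)^k) * ((-1:ℝ)^k) = 1 := by
  rw [← pow_add]
  exact Even.neg_one_pow ⟨k, by ring⟩

include ht0 htn hlt hv in
private lemma F_start : ∀ i ≤ n, Ff b i (t i) = ((i:ℝ)+1) * π := by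
  intro i hi
  unfold Ff
  rw [b_t_val hv i hi, neg_one_pow_sq, Real.arccos_one, add_zero]

include ht0 htn hlt hv in
private lemma F_end : ∀ i, i + 1 ≤ n → Ff b i (t (i+1)) = ((i:ℝ)+2) * π := by
  intro i hi
  unfold Ff
  rw [b_t_val hv (i+1) hi]
  have : (-1:ℝ)^(i+1) * (-1:ℝ)^(i+1+1) = -1 := by
    rw [← pow_add]
    exact Odd.neg_one_pow ⟨i+1, by ring⟩
  rw [this, Real.arccos_neg_one]
  ring

include hr in
private lemma F_cos : ∀ (i : ℕ), ∀ s ∈ Icc (0:ℝ) 1, Real.cos (Ff b i s) = 2 * b s - 1 := by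
  intro i s hs
  obtain ⟨hb0, hb1⟩ := hr s hs
  have harg : (-1:ℝ)^(i+1) * (2 * b s - 1) ∈ Icc (-1:ℝ) 1 := by
    rcases Nat.even_or_odd (i+1) with he | ho
    · rw [he.neg_one_pow]; constructor <;> nlinarith
    · rw [ho.neg_one_pow]; constructor <;> nlinarith
  unfold Ff
  rw [add_comm, ← Nat.cast_succ, cos_add_nat_pi, Real.cos_arccos harg.1 harg.2,
    ← mul_assoc, neg_one_pow_sq, one_mul]

include hn hlt hm in
private lemma F_mono : ∀ i < n, MonotoneOn (Ff b i) (Icc (t i) (t (i+1))) := by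
  intro i hi
  have hmm := hm (i+1) (by omega) (by omega)
  rw [Nat.add_sub_cancel] at hmm
  intro x hx y hy hxy
  unfold Ff
  apply add_le_add_right
  apply arccos_antitone
  rcases Nat.even_or_odd (i+1) with he | ho
  · rw [if_neg (by simpa using he)] at hmm
    have := hmm hx hy hxy
    rw [he.neg_one_pow]
    nlinarith
  · rw [if_pos ho] at hmm
    have := hmm hx hy hxy
    rw [ho.neg_one_pow]
    nlinarith

include hn ht0 htn hlt in
private lemma F_cont (hc : ContinuousOn b (Icc 0 1)) :
    ∀ i < n, ContinuousOn (Ff b i) (Icc (t i) (t (i+1))) := by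
  intro i hi
  have hsub : Icc (t i) (t (i+1)) ⊆ Icc (0:ℝ) 1 :=
    Icc_subset_Icc (t_range ht0 htn hlt i (by omega)).1 (t_range ht0 htn hlt (i+1) (by omega)).2
  unfold Ff
  exact continuousOn_const.add (Real.continuous_arccos.comp_continuousOn
    (continuousOn_const.mul ((continuousOn_const.mul (hc.mono hsub)).sub continuousOn_const)))

end core
section pin
open Real

variable {b : ℝ → ℝ} {n : ℕ} {t : ℕ → ℝ}
variable (hr : ∀ s ∈ Icc (0:ℝ) 1, b s ∈ Icc (0:ℝ) 1)
variable (hn : 1 ≤ n) (ht0 : t 0 = 0) (htn : t n = 1)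
variable (hlt : ∀ i < n, t i < t (i+1))
variable (hv : ∀ i ≤ n, b (t i) = if Odd i then 1 else 0)
variable (hm : ∀ i, 1 ≤ i → i ≤ n →
    if Odd i then MonotoneOn b (Icc (t (i-1)) (t i))
    else AntitoneOn b (Icc (t (i-1)) (t i)))

include ht0 htn hlt hv hm in
private lemma pin_lemma (θ : ℝ → ℝ) (hθc : Continuous θ) (hθm : Monotone θ)
    (hθ0 : θ 0 = π) (hθcos : ∀ s ∈ Icc (0:ℝ) 1, Real.cos (θ s) = 2 * b s - 1) :
    ∀ i ≤ n, θ (t i) = ((i:ℝ)+1) * π := by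
  intro i
  induction i with
  | zero => intro _; rw [ht0, hθ0]; norm_num
  | succ i ih =>
      intro hin
      have hIH : θ (t i) = ((i:ℝ)+1) * π := ih (by omega)
      have htle : t i ≤ t (i+1) := (hlt i (by omega)).le
      have hAcos : Real.cos (θ (t (i+1))) = (-1:ℝ)^(i+1+1) := by
        rw [hθcos _ (t_range ht0 htn hlt (i+1) hin)]
        exact b_t_val hv (i+1) hin
      have hge : ((i:ℝ)+1) * π ≤ θ (t (i+1)) := hIH ▸ hθm htle
      have hne : θ (t (i+1)) ≠ ((i:ℝ)+1) * π := by
        intro h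
        rw [h, ← Nat.cast_succ, cos_nat_pi] at hAcos
        simp only [Nat.succ_eq_add_one] at hAcos
        nlinarith [neg_one_pow_sq (i+1), hAcos, pow_succ (-1:ℝ) (i+1)]
      have hgt : ((i:ℝ)+1) * π < θ (t (i+1)) := lt_of_le_of_ne hge (Ne.symm hne)
      -- θ (t (i+1)) = m * π for some natural m
      have hApi : ∃ m : ℤ, θ (t (i+1)) = m * π := by
        rcases Nat.even_or_odd (i+1+1) with he | ho
        · rw [he.neg_one_pow] at hAcos
          obtain ⟨k, hk⟩ := (Real.cos_eq_one_iff _).mp hAcos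
          exact ⟨2*k, by push_cast; linarith⟩
        · rw [ho.neg_one_pow] at hAcos
          obtain ⟨k, hk⟩ := Real.cos_eq_neg_one_iff.mp hAcos
          exact ⟨2*k+1, by push_cast; linarith⟩
      obtain ⟨m, hmA⟩ := hApi
      have hmpos : ((i:ℝ)+1) < (m:ℝ) := by
        rw [hmA] at hgt
        exact lt_of_mul_lt_mul_right (by linarith) Real.pi_pos.le
      have hmint : (i:ℤ) + 1 < m := by exact_mod_cast hmpos
      set M : ℕ := m.toNat with hMdef
      have hMm : (M:ℤ) = m := Int.toNat_of_nonneg (by omega)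
      have hMR : ((M:ℕ):ℝ) = (m:ℝ) := by exact_mod_cast hMm
      have hMA : θ (t (i+1)) = (M:ℝ) * π := by rw [hmA, hMR]
      have hMgt : i + 1 < M := by omega
      have hMparity : (-1:ℝ)^M = (-1:ℝ)^(i+1+1) := by
        rw [hMA, cos_nat_pi] at hAcos; exact hAcos
      -- rule out M ≥ i+3
      have hM : M = i + 2 := by
        by_contra hMne
        have hM3 : i + 3 ≤ M := by omega
        have hM4 : i + 4 ≤ M := by
          rcases Nat.eq_or_lt_of_le hM3 with h | h
          · exfalso
            rw [← h] at hMparity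
            rcases Nat.even_or_odd i with he | ho
            · obtain ⟨k, hk⟩ := he
              subst hk
              rw [Odd.neg_one_pow ⟨k+1, by omega⟩, Even.neg_one_pow ⟨k+1, by omega⟩] at hMparity
              norm_num at hMparity
            · obtain ⟨k, hk⟩ := ho
              subst hk
              rw [Even.neg_one_pow ⟨k+2, by omega⟩, Odd.neg_one_pow ⟨k+1, by omega⟩] at hMparity
              norm_num at hMparity
          · omega
        have hA4 : ((i:ℝ)+4) * π ≤ θ (t (i+1)) := by
          rw [hMA]
          have : ((i:ℝ)+4) ≤ (M:ℝ) := by exact_mod_cast hM4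
          nlinarith [Real.pi_pos]
        have hiv := intermediate_value_Icc htle hθc.continuousOn
        have hs1 : ((i:ℝ)+2) * π ∈ Icc (θ (t i)) (θ (t (i+1))) := by
          rw [hIH]; constructor <;> nlinarith [Real.pi_pos]
        have hs2 : ((i:ℝ)+3) * π ∈ Icc (θ (t i)) (θ (t (i+1))) := by
          rw [hIH]; constructor <;> nlinarith [Real.pi_pos]
        obtain ⟨s1, hs1mem, hθs1⟩ := hiv hs1
        obtain ⟨s2, hs2mem, hθs2⟩ := hiv hs2
        have hs12 : s1 ≤ s2 := by
          by_contra hc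
          have := hθm (le_of_not_ge hc)
          rw [hθs1, hθs2] at this
          nlinarith [Real.pi_pos]
        have hsubi : Icc (t i) (t (i+1)) ⊆ Icc (0:ℝ) 1 :=
          Icc_subset_Icc (t_range ht0 htn hlt i (by omega)).1 (t_range ht0 htn hlt (i+1) hin).2
        have hb1 : 2 * b s1 - 1 = (-1:ℝ)^i := by
          rw [← hθcos s1 (hsubi hs1mem), hθs1,
            (by push_cast; ring : ((i:ℝ)+2) * π = ((i+2 : ℕ):ℝ) * π), cos_nat_pi,
            pow_add]
          norm_num
        have hb2 : 2 * b s2 - 1 = -(-1:ℝ)^i := by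
          rw [← hθcos s2 (hsubi hs2mem), hθs2,
            (by push_cast; ring : ((i:ℝ)+3) * π = ((i+3 : ℕ):ℝ) * π), cos_nat_pi,
            pow_add]
          norm_num
        have hmm := hm (i+1) (by omega) hin
        rw [Nat.add_sub_cancel] at hmm
        rcases Nat.even_or_odd i with he | ho
        · rw [if_pos he.add_one] at hmm
          have := hmm hs1mem hs2mem hs12
          rw [he.neg_one_pow] at hb1 hb2
          linarith
        · rw [if_neg (by simpa using ho.add_one)] at hmm
          have := hmm hs1mem hs2mem hs12
          rw [ho.neg_one_pow] at hb1 hb2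
          linarith
      rw [hMA, hM]
      push_cast
      ring

end pin
section ex
open Real

variable {b : ℝ → ℝ} {n : ℕ} {t : ℕ → ℝ}
variable (hr : ∀ s ∈ Icc (0:ℝ) 1, b s ∈ Icc (0:ℝ) 1)
variable (hn : 1 ≤ n) (ht0 : t 0 = 0) (htn : t n = 1)
variable (hlt : ∀ i < n, t i < t (i+1))
variable (hv : ∀ i ≤ n, b (t i) = if Odd i then 1 else 0)
variable (hm : ∀ i, 1 ≤ i → i ≤ n →
    if Odd i then MonotoneOn b (Icc (t (i-1)) (t i))
    else AntitoneOn b (Icc (t (i-1)) (t i)))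

include ht0 htn hlt hv hm in
private lemma pin2_lemma (θ : ℝ → ℝ) (hθc : Continuous θ) (hθm : Monotone θ)
    (hθ0 : θ 0 = π) (hθcos : ∀ s ∈ Icc (0:ℝ) 1, Real.cos (θ s) = 2 * b s - 1) :
    ∀ i < n, ∀ s ∈ Icc (t i) (t (i+1)), θ s = Ff b i s := by
  intro i hi s hs
  have hsubi : Icc (t i) (t (i+1)) ⊆ Icc (0:ℝ) 1 :=
    Icc_subset_Icc (t_range ht0 htn hlt i (by omega)).1 (t_range ht0 htn hlt (i+1) (by omega)).2
  have h1 := pin_lemma ht0 htn hlt hv hm θ hθc hθm hθ0 hθcos i (by omega)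
  have h2 := pin_lemma ht0 htn hlt hv hm θ hθc hθm hθ0 hθcos (i+1) (by omega)
  push_cast at h2
  have hls : ((i:ℝ)+1) * π ≤ θ s := h1 ▸ hθm hs.1
  have hsu : θ s ≤ ((i:ℝ)+1+1) * π := h2 ▸ hθm hs.2
  set x := θ s - ((i:ℝ)+1) * π with hxdef
  have hx0 : 0 ≤ x := by simp only [hxdef]; linarith
  have hxpi : x ≤ π := by simp only [hxdef]; linarith
  have hcosθ := hθcos s (hsubi hs)
  have h3 : θ s = x + ((i+1:ℕ):ℝ) * π := by push_cast; simp only [hxdef]; ring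
  rw [h3, cos_add_nat_pi] at hcosθ
  have hcosx : Real.cos x = (-1:ℝ)^(i+1) * (2 * b s - 1) := by
    have h4 := congrArg (fun z => ((-1:ℝ)^(i+1)) * z) hcosθ
    simp only [← mul_assoc, neg_one_pow_sq, one_mul] at h4
    exact h4
  have harc : Real.arccos (Real.cos x) = x := Real.arccos_cos hx0 hxpi
  unfold Ff
  rw [← hcosx, harc]
  simp only [hxdef]
  ring

include hr hn ht0 htn hlt hv hm in
private lemma exists_lift (hc : ContinuousOn b (Icc 0 1)) :
    ∃ Θ : ℝ → ℝ, ContinuousOn Θ (Icc (0:ℝ) 1) ∧ MonotoneOn Θ (Icc (0:ℝ) 1) ∧ Θ 0 = π ∧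
    (∀ s ∈ Icc (0:ℝ) 1, Real.cos (Θ s) = 2 * b s - 1) ∧
    (∀ i < n, ∀ s ∈ Icc (t i) (t (i+1)), Θ s = Ff b i s) := by
  classical
  set I : ℝ → ℕ := fun s => Nat.findGreatest (fun j => t j ≤ s) (n-1) with hIdef
  set Θ : ℝ → ℝ := fun s => Ff b (I s) s with hΘdef
  have Ispec : ∀ s ∈ Icc (0:ℝ) 1, I s < n ∧ t (I s) ≤ s ∧ s ≤ t (I s + 1) := by
    intro s hs
    have h1 : I s ≤ n - 1 := Nat.findGreatest_le _
    refine ⟨by omega, ?_, ?_⟩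
    · exact Nat.findGreatest_spec (P := fun j => t j ≤ s) (m := 0) (Nat.zero_le _) (show t 0 ≤ s by rw [ht0]; exact hs.1)
    · by_cases h : I s + 1 ≤ n - 1
      · have := Nat.findGreatest_is_greatest (P := fun j => t j ≤ s) (Nat.lt_succ_self _) h
        exact (not_le.mp this).le
      · have he : I s + 1 = n := by omega
        rw [he, htn]; exact hs.2
  have pieceEq : ∀ i < n, ∀ s ∈ Icc (t i) (t (i+1)), Θ s = Ff b i s := by
    intro i hi s hs
    have hsubi : Icc (t i) (t (i+1)) ⊆ Icc (0:ℝ) 1 :=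
      Icc_subset_Icc (t_range ht0 htn hlt i (by omega)).1 (t_range ht0 htn hlt (i+1) (by omega)).2
    obtain ⟨hjn, hj1, hj2⟩ := Ispec s (hsubi hs)
    show Ff b (I s) s = Ff b i s
    rcases lt_trichotomy (I s) i with h | h | h
    · have e3 : I s + 1 = i := by
        by_contra hne
        have h5 : t (I s + 1) < t (I s + 2) := hlt (I s + 1) (by omega)
        have h6 : t (I s + 2) ≤ t i := t_mono t n hlt i (by omega) (I s + 2) (by omega)
        linarith [hs.1, hj2]
      have e1 : t (I s + 1) ≤ t i := by rw [e3]
      have e2 : s = t i := le_antisymm (hj2.trans e1) hs.1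
      have key : Ff b (I s) (t i) = Ff b i (t i) := by
        rw [← e3, F_end ht0 htn hlt hv (I s) (by omega),
          F_start ht0 htn hlt hv (I s + 1) (by omega)]
        push_cast; ring
      calc Ff b (I s) s = Ff b (I s) (t i) := congrArg (Ff b (I s)) e2
        _ = Ff b i (t i) := key
        _ = Ff b i s := (congrArg (Ff b i) e2).symm
    · rw [h]
    · have e3 : I s = i + 1 := by
        by_contra hne
        have h5 : t (i+1) < t (i+2) := hlt (i+1) (by omega)
        have h6 : t (i+2) ≤ t (I s) := t_mono t n hlt (I s) (by omega) (i+2) (by omega)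
        linarith [hj1, hs.2]
      have e2 : s = t (i+1) := le_antisymm hs.2 (by rw [← e3]; exact hj1)
      have key : Ff b (I s) (t (i+1)) = Ff b i (t (i+1)) := by
        rw [e3, F_start ht0 htn hlt hv (i+1) (by omega),
          F_end ht0 htn hlt hv i (by omega)]
        push_cast; ring
      calc Ff b (I s) s = Ff b (I s) (t (i+1)) := congrArg (Ff b (I s)) e2
        _ = Ff b i (t (i+1)) := key
        _ = Ff b i s := (congrArg (Ff b i) e2).symm
  have glue : ∀ k, 1 ≤ k → k ≤ n →
      MonotoneOn Θ (Icc (t 0) (t k)) ∧ ContinuousOn Θ (Icc (t 0) (t k)) := by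
    intro k
    induction k with
    | zero => intro h1 _; exact absurd h1 (by norm_num)
    | succ k ih =>
        intro h1 h2
        have hmk : MonotoneOn Θ (Icc (t k) (t (k+1))) := by
          intro x hx y hy hxy
          rw [pieceEq k (by omega) x hx, pieceEq k (by omega) y hy]
          exact F_mono hn hlt hm k (by omega) hx hy hxy
        have hck : ContinuousOn Θ (Icc (t k) (t (k+1))) :=
          (F_cont hn ht0 htn hlt hc k (by omega)).congr (pieceEq k (by omega))
        by_cases hk : k = 0
        · subst hk; exact ⟨hmk, hck⟩
        · obtain ⟨ihm, ihc⟩ := ih (by omega) (by omega)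
          exact ⟨monoGlue ihm hmk,
            contGlue (t_mono t n hlt k (by omega) 0 (Nat.zero_le _)) (hlt k (by omega)).le ihc hck⟩
  have h01 := glue n hn le_rfl
  rw [ht0, htn] at h01
  have h0mem : (0:ℝ) ∈ Icc (t 0) (t 1) := by
    constructor
    · rw [ht0]
    · have := hlt 0 (by omega); linarith [ht0]
  refine ⟨Θ, h01.2, h01.1, ?_, fun s hs => F_cos hr (I s) s hs, pieceEq⟩
  have := pieceEq 0 (by omega) 0 h0mem
  rw [this, ← ht0, F_start ht0 htn hlt hv 0 (by omega)]
  norm_num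

end ex
section cover
open Real
variable {b : ℝ → ℝ} {n : ℕ} {t : ℕ → ℝ}
variable (hn : 1 ≤ n) (ht0 : t 0 = 0) (htn : t n = 1)
variable (hlt : ∀ i < n, t i < t (i+1))

include hn ht0 htn hlt in
private lemma piece_cover : ∀ s ∈ Icc (0:ℝ) 1, ∃ i < n, s ∈ Icc (t i) (t (i+1)) := by
  classical
  intro s hs
  set I : ℕ := Nat.findGreatest (fun j => t j ≤ s) (n-1) with hIdef
  have h1 : I ≤ n - 1 := Nat.findGreatest_le _
  refine ⟨I, by omega, ?_, ?_⟩
  · exact Nat.findGreatest_spec (P := fun j => t j ≤ s) (m := 0) (Nat.zero_le _)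
      (show t 0 ≤ s by rw [ht0]; exact hs.1)
  · by_cases h : I + 1 ≤ n - 1
    · have := Nat.findGreatest_is_greatest (P := fun j => t j ≤ s) (Nat.lt_succ_self _) h
      exact (not_le.mp this).le
    · have he : I + 1 = n := by omega
      rw [he, htn]; exact hs.2

end cover
theorem zigzag_unique_lift (b : ℝ → ℝ) (n : ℕ) (hb : IsZigzag b n) :
    (∃! θ : Icc (0:ℝ) 1 → ℝ, Continuous θ ∧ Monotone θ ∧
      θ ⟨0, by norm_num⟩ = Real.pi ∧
      ∀ t : Icc (0:ℝ) 1, Real.cos (θ t) = 2 * b t - 1) ∧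
    (∀ θ : Icc (0:ℝ) 1 → ℝ, Continuous θ → Monotone θ →
      θ ⟨0, by norm_num⟩ = Real.pi →
      (∀ t : Icc (0:ℝ) 1, Real.cos (θ t) = 2 * b t - 1) →
      θ ⟨1, by norm_num⟩ = (n + 1) * Real.pi) := by
  obtain ⟨hc, hr, hcase⟩ := hb
  have mkbar : ∀ θ : Icc (0:ℝ) 1 → ℝ, Continuous θ → Monotone θ →
      (θ ⟨0, by norm_num⟩ = Real.pi) → (∀ t : Icc (0:ℝ) 1, Real.cos (θ t) = 2 * b t - 1) →
      Continuous (fun s => θ (clampI s)) ∧ Monotone (fun s => θ (clampI s)) ∧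
      (fun s => θ (clampI s)) 0 = Real.pi ∧
      (∀ s ∈ Icc (0:ℝ) 1, Real.cos ((fun s => θ (clampI s)) s) = 2 * b s - 1) ∧
      (∀ s : Icc (0:ℝ) 1, θ s = (fun s => θ (clampI s)) s.val) := by
    intro θ hθc hθm hθ0 hθcos
    refine ⟨hθc.comp clampI_continuous, hθm.comp clampI_monotone, ?_, ?_, ?_⟩
    · show θ (clampI 0) = Real.pi
      rw [clampI_eq (⟨le_rfl, zero_le_one⟩ : (0:ℝ) ∈ Icc (0:ℝ) 1)]
      exact hθ0
    · intro s hs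
      show Real.cos (θ (clampI s)) = 2 * b s - 1
      rw [clampI_eq hs]
      exact hθcos ⟨s, hs⟩
    · intro s
      show θ s = θ (clampI s.val)
      rw [clampI_eq s.2]
  rcases hcase with ⟨hn0, hz⟩ | ⟨hn1, t, ht0, htn, hlt, hv, hm⟩
  · -- n = 0
    subst hn0
    have uni : ∀ θ : Icc (0:ℝ) 1 → ℝ, Continuous θ → Monotone θ →
        (θ ⟨0, by norm_num⟩ = Real.pi) →
        (∀ t : Icc (0:ℝ) 1, Real.cos (θ t) = 2 * b t - 1) →
        ∀ s : Icc (0:ℝ) 1, θ s = Real.pi := by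
      intro θ hθc hθm hθ0 hθcos s
      obtain ⟨hbc, hbm, hb0, hbcos, hbeq⟩ := mkbar θ hθc hθm hθ0 hθcos
      rw [hbeq s]
      set f := fun s => θ (clampI s) with hfdef
      have hge : Real.pi ≤ f s.1 := by rw [← hb0]; exact hbm s.2.1
      have hcos : Real.cos (f s.1) = -1 := by
        rw [hbcos s.1 s.2, hz s.1 s.2]; norm_num
      obtain ⟨k, hk⟩ := Real.cos_eq_neg_one_iff.mp hcos
      have hk0 : 0 ≤ k := by
        by_contra hkneg
        have hk1 : (k:ℝ) ≤ -1 := by exact_mod_cast (by omega : k ≤ -1)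
        nlinarith [Real.pi_pos]
      rcases eq_or_lt_of_le hk0 with hk1 | hk1
      · rw [← hk, ← hk1]; norm_num
      · exfalso
        have hk2 : (1:ℝ) ≤ (k:ℝ) := by exact_mod_cast hk1
        have hIV := intermediate_value_Icc (s.2.1 : (0:ℝ) ≤ s.1) hbc.continuousOn
        have hmem : 2 * Real.pi ∈ Icc (f 0) (f s.1) := by
          rw [hb0, ← hk]
          constructor
          · nlinarith [Real.pi_pos]
          · nlinarith [Real.pi_pos]
        obtain ⟨u, hu, hfu⟩ := hIV hmem
        have humem : u ∈ Icc (0:ℝ) 1 := ⟨hu.1, hu.2.trans s.2.2⟩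
        have := hbcos u humem
        rw [hfu, Real.cos_two_pi, hz u humem] at this
        norm_num at this
    refine ⟨⟨fun _ => Real.pi, ⟨continuous_const, monotone_const, rfl, ?_⟩, ?_⟩, ?_⟩
    · intro s; rw [hz s.1 s.2, Real.cos_pi]; norm_num
    · intro y hy
      obtain ⟨hyc, hym, hy0, hycos⟩ := hy
      funext s
      exact uni y hyc hym hy0 hycos s
    · intro θ hθc hθm hθ0 hθcos
      rw [uni θ hθc hθm hθ0 hθcos ⟨1, by norm_num⟩]
      norm_num
  · -- n ≥ 1
    obtain ⟨Θ, Θc, Θm, Θ0, Θcos, Θpiece⟩ := exists_lift hr hn1 ht0 htn hlt hv hm hc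
    refine ⟨⟨fun s => Θ s.val, ⟨Θc.restrict, fun x y h => Θm x.2 y.2 h, Θ0,
      fun s => Θcos s.1 s.2⟩, ?_⟩, ?_⟩
    · intro y hy
      obtain ⟨hyc, hym, hy0, hycos⟩ := hy
      funext s
      obtain ⟨hbc, hbm, hb0, hbcos, hbeq⟩ := mkbar y hyc hym hy0 hycos
      obtain ⟨i, hi, hsmem⟩ := piece_cover hn1 ht0 htn hlt s.1 s.2
      have e1 : y s = Ff b i s.1 := by
        rw [hbeq s]
        exact pin2_lemma ht0 htn hlt hv hm _ hbc hbm hb0 hbcos i hi s.1 hsmem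
      have e2 : Θ s.1 = Ff b i s.1 := Θpiece i hi s.1 hsmem
      show y s = Θ s.1
      rw [e1, e2]
    · intro θ hθc hθm hθ0 hθcos
      obtain ⟨hbc, hbm, hb0, hbcos, hbeq⟩ := mkbar θ hθc hθm hθ0 hθcos
      have hpin := pin_lemma ht0 htn hlt hv hm _ hbc hbm hb0 hbcos n le_rfl
      have e1 : θ ⟨1, by norm_num⟩ = (fun s => θ (clampI s)) (t n) := by
        rw [htn]; exact hbeq ⟨1, by norm_num⟩
      rw [e1]; exact hpin
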